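/- Let ε denote the element of the tilt Ẽ⁺ = lim_{x↦x^p} O_{C_p}/p given by a compatible system of primitive p-power roots of unity. Then the valuation of ε − 1 in Ẽ⁺ equals p/(p−1), and in particular is positive, so Ẽ = Ẽ⁺[(ε−1)^{-1}] is the fraction field of Ẽ⁺. -/

import Mathlib

open scoped NNReal

/- Helper: the old `[Fact (v p ≠ 1)]` gives the instance `Fact ¬IsUnit (p : O)` that the
current `PreTilt` API requires (same derivation as Mathlib's `Tilt`). -/
theorem stmt8_fact_not_isUnit (p : ℕ) (K : Type*) [Field K] (v : Valuation K ℝ≥0)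
    (O : Type*) [CommRing O] [Algebra O K] (hv : v.Integers O) [hvp : Fact (v p ≠ 1)] :
    Fact ¬IsUnit (p : O) :=
  Fact.mk <| mt hv.one_of_isUnit <| (map_natCast (algebraMap O K) p).symm ▸ hvp.1


section Aux
set_option linter.unusedSectionVars false
open Polynomial Finset Perfection

-- geom-sum valuation helper
lemma val_pow_sub_one_le {K : Type*} [Field K] (v : Valuation K ℝ≥0) {a : K} (ha : v a ≤ 1)
    (j : ℕ) : v (a ^ j - 1) ≤ v (a - 1) := by
  calc v (a ^ j - 1) = v (∑ i ∈ Finset.range j, a ^ i) * v (a - 1) := by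
        rw [← v.map_mul, geom_sum_mul]
      _ ≤ 1 * v (a - 1) := by
        refine mul_le_mul_left (v.map_sum_le fun i _ => ?_) _
        rw [map_pow]; exact pow_le_one' ha i
      _ = v (a - 1) := one_mul _

lemma aux_val_prim (p : ℕ) [hp : Fact p.Prime] {K : Type*} [Field K] (v : Valuation K ℝ≥0)
    {O : Type*} [CommRing O] [Algebra O K] (hv : Valuation.Integers v O)
    {z : O} (hz : IsPrimitiveRoot z (p ^ 2)) :
    v (algebraMap O K (z - 1)) ^ (p * (p - 1)) = v (p : K) := by
  have hp2 : 0 < p ^ 2 := pow_pos hp.out.pos 2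
  haveI : NeZero (p ^ 2) := ⟨hp2.ne'⟩
  set zK := algebraMap O K z with hzKdef
  have hzK : IsPrimitiveRoot zK (p ^ 2) := hz.map_of_injective hv.hom_inj
  have hzK1 : v zK ≤ 1 := hv.map_le_one z
  have hprod : (p : K) = ∏ μ ∈ primitiveRoots (p ^ 2) K, (1 - μ) := by
    have h1 : eval 1 (cyclotomic (p ^ (1 + 1)) K) = (p : K) := eval_one_cyclotomic_prime_pow 1
    rw [show (1:ℕ) + 1 = 2 from rfl, cyclotomic_eq_prod_X_sub_primitiveRoots hzK] at h1
    rw [← h1, eval_prod]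
    exact Finset.prod_congr rfl fun μ _ => by simp
  have hall : ∀ μ ∈ primitiveRoots (p ^ 2) K, v (1 - μ) = v (algebraMap O K (z - 1)) := by
    intro μ hμ
    rw [mem_primitiveRoots hp2] at hμ
    obtain ⟨i, _, hi⟩ := hzK.eq_pow_of_pow_eq_one hμ.pow_eq_one
    obtain ⟨k, _, hk⟩ := hμ.eq_pow_of_pow_eq_one hzK.pow_eq_one
    have hμ1 : v μ ≤ 1 := by rw [← hi, map_pow]; exact pow_le_one' hzK1 i
    have e1 : v (1 - μ) = v (μ - 1) := by rw [← v.map_neg, neg_sub]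
    have e2 : v (algebraMap O K (z - 1)) = v (zK - 1) := by rw [map_sub, map_one]
    rw [e1, e2]
    refine le_antisymm ?_ ?_
    · rw [← hi]; exact val_pow_sub_one_le v hzK1 i
    · rw [← hk]; exact val_pow_sub_one_le v hμ1 k
  have hcard : (primitiveRoots (p ^ 2) K).card = p * (p - 1) := by
    rw [hzK.card_primitiveRoots, Nat.totient_prime_pow hp.out (by norm_num)]
    ring_nf
  rw [← hcard]
  calc v (algebraMap O K (z - 1)) ^ (primitiveRoots (p ^ 2) K).card
      = ∏ _μ ∈ primitiveRoots (p ^ 2) K, v (algebraMap O K (z - 1)) :=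
        (Finset.prod_const _).symm
    _ = ∏ μ ∈ primitiveRoots (p ^ 2) K, v (1 - μ) := (Finset.prod_congr rfl hall).symm
    _ = v (∏ μ ∈ primitiveRoots (p ^ 2) K, (1 - μ)) := (map_prod v _ _).symm
    _ = v (p : K) := by rw [← hprod]



variable {p : ℕ} [hp : Fact p.Prime]
    {K : Type*} [Field K] {v : Valuation K ℝ≥0}
    {O : Type*} [CommRing O] [Algebra O K] {hv : Valuation.Integers v O}
    [hvp1 : Fact (v p ≠ 1)] [hnu : Fact ¬IsUnit (p : O)]

lemma dvd_core (hv : v.Integers O) (hvp : v (p : K) ≠ 0) (f g : Perfection (ModP O p) p)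
    (hf : ∀ n, Perfection.coeff (ModP O p) p n f ≠ 0)
    (hg : ∀ n, Perfection.coeff (ModP O p) p n g ≠ 0)
    (hle : ∀ n, ModP.preVal K v O p (Perfection.coeff (ModP O p) p n g) ≤
      ModP.preVal K v O p (Perfection.coeff (ModP O p) p n f))
    (hbig : ∀ n, v (p : K) <
      ModP.preVal K v O p (Perfection.coeff (ModP O p) p n f) ^ 2) :
    f ∣ g := by
  classical
  have hsurj := Ideal.Quotient.mk_surjective (I := (Ideal.span {(p : O)}))
  choose a ha using fun n => hsurj (Perfection.coeff (ModP O p) p n f)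
  choose b hb using fun n => hsurj (Perfection.coeff (ModP O p) p n g)
  have hva : ∀ n, v (algebraMap O K (a n)) =
      ModP.preVal K v O p (Perfection.coeff (ModP O p) p n f) := by
    intro n
    rw [← ha n, ModP.preVal_mk hv (by rw [ha n]; exact hf n)]
  have hvb : ∀ n, v (algebraMap O K (b n)) =
      ModP.preVal K v O p (Perfection.coeff (ModP O p) p n g) := by
    intro n
    rw [← hb n, ModP.preVal_mk hv (by rw [hb n]; exact hg n)]
  have hdvd : ∀ n, a n ∣ b n := fun n =>
    hv.dvd_of_le (by rw [hva n, hvb n]; exact hle n)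
  choose c hc using hdvd
  have hacompat : ∀ n, (Ideal.Quotient.mk (Ideal.span {(p : O)}) (a (n + 1)) :
      ModP O p) ^ p = Ideal.Quotient.mk (Ideal.span {(p : O)}) (a n) := by
    intro n
    rw [ha, ha]
    exact Perfection.coeff_pow_p' f n
  have hbcompat : ∀ n, (Ideal.Quotient.mk (Ideal.span {(p : O)}) (b (n + 1)) :
      ModP O p) ^ p = Ideal.Quotient.mk (Ideal.span {(p : O)}) (b n) := by
    intro n
    rw [hb, hb]
    exact Perfection.coeff_pow_p' g n
  have hkey : ∀ n, v (algebraMap O K (c (n + 2) ^ p - c (n + 1))) *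
      v (algebraMap O K (a (n + 1))) ≤ v (p : K) := by
    intro n
    have hmem : (p : O) ∣ a (n + 1) * (c (n + 2) ^ p - c (n + 1)) := by
      have h0 : (Ideal.Quotient.mk (Ideal.span {(p : O)})
          (a (n + 1) * (c (n + 2) ^ p - c (n + 1))) : ModP O p) = 0 := by
        rw [map_mul, map_sub, map_pow, mul_sub, ← hacompat (n+1)]
        rw [← mul_pow, ← map_mul, ← hc (n+2)]
        have h3 : (Ideal.Quotient.mk (Ideal.span {(p : O)}) (a (n+1)) : ModP O p) *
            Ideal.Quotient.mk (Ideal.span {(p : O)}) (c (n+1)) =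
            Ideal.Quotient.mk (Ideal.span {(p : O)}) (b (n+1)) := by
          rw [← map_mul, ← hc (n+1)]
        rw [← hacompat (n+1)] at h3
        rw [h3, hbcompat (n+1), sub_self]
      exact Ideal.mem_span_singleton.mp (Ideal.Quotient.eq_zero_iff_mem.mp h0)
    have h5 := hv.le_of_dvd hmem
    rw [map_mul, v.map_mul, map_natCast] at h5
    rwa [mul_comm] at h5
  have hsmall : ∀ n, v (algebraMap O K (c (n + 2) ^ p - c (n + 1))) ^ 2 < v (p : K) := by
    intro n
    have h1 := hkey n
    have h2 : v (p : K) < v (algebraMap O K (a (n + 1))) ^ 2 := by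
      rw [hva (n+1)]; exact hbig (n+1)
    have h3 : v (algebraMap O K (c (n + 2) ^ p - c (n + 1))) ^ 2 *
        v (algebraMap O K (a (n + 1))) ^ 2 ≤ v (p : K) ^ 2 := by
      rw [← mul_pow]
      exact pow_le_pow_left' h1 2
    have h4 : v (p : K) ^ 2 < v (p : K) * v (algebraMap O K (a (n + 1))) ^ 2 := by
      rw [sq (v (p : K))]
      exact mul_lt_mul_of_pos_left h2 (lt_of_le_of_ne zero_le (Ne.symm hvp))
    exact lt_of_mul_lt_mul_right (lt_of_le_of_lt h3 h4) zero_le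
  have hdvd2 : ∀ n, (p : O) ∣ c (n + 2) ^ (p ^ 2) - c (n + 1) ^ p := by
    intro n
    obtain ⟨r, hr⟩ := exists_add_pow_prime_eq hp.out (c (n + 1)) (c (n + 2) ^ p - c (n + 1))
    have hdp : (p : O) ∣ (c (n + 2) ^ p - c (n + 1)) ^ p := by
      refine hv.dvd_of_le ?_
      rw [map_pow, v.map_pow, map_natCast]
      calc v (algebraMap O K (c (n + 2) ^ p - c (n + 1))) ^ p
          ≤ v (algebraMap O K (c (n + 2) ^ p - c (n + 1))) ^ 2 :=
            pow_le_pow_of_le_one zero_le (hv.map_le_one _) hp.out.two_le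
        _ ≤ v (p : K) := (hsmall n).le
    have heq : c (n + 2) ^ (p ^ 2) - c (n + 1) ^ p =
        (c (n + 2) ^ p - c (n + 1)) ^ p + p * (c (n + 1) * (c (n + 2) ^ p - c (n + 1)) * r) := by
      have hcd : c (n + 1) + (c (n + 2) ^ p - c (n + 1)) = c (n + 2) ^ p := by ring
      rw [pow_two, pow_mul, ← hcd, hr]; ring
    rw [heq]
    exact dvd_add hdp (Dvd.intro _ rfl)
  refine ⟨⟨fun n => (Ideal.Quotient.mk (Ideal.span {(p : O)}) (c (n + 1)) :
      ModP O p) ^ p, ?_⟩, ?_⟩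
  · intro n
    show ((Ideal.Quotient.mk (Ideal.span {(p : O)}) (c (n + 2)) : ModP O p) ^ p) ^ p =
      (Ideal.Quotient.mk (Ideal.span {(p : O)}) (c (n + 1)) : ModP O p) ^ p
    rw [← pow_mul, ← pow_two, ← map_pow, ← map_pow]
    exact (Ideal.Quotient.mk_eq_mk_iff_sub_mem _ _).mpr
      (Ideal.mem_span_singleton.mpr (hdvd2 n))
  · apply Perfection.ext
    intro n
    erw [RingHom.map_mul]
    have hcoeffh : Perfection.coeff (ModP O p) p n
        (⟨fun n => (Ideal.Quotient.mk (Ideal.span {(p : O)}) (c (n + 1)) :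
          ModP O p) ^ p, by
            intro n
            show ((Ideal.Quotient.mk (Ideal.span {(p : O)}) (c (n + 2)) : ModP O p) ^ p) ^ p =
              (Ideal.Quotient.mk (Ideal.span {(p : O)}) (c (n + 1)) : ModP O p) ^ p
            rw [← pow_mul, ← pow_two, ← map_pow, ← map_pow]
            exact (Ideal.Quotient.mk_eq_mk_iff_sub_mem _ _).mpr
              (Ideal.mem_span_singleton.mpr (hdvd2 n))⟩ : Perfection (ModP O p) p) =
        (Ideal.Quotient.mk (Ideal.span {(p : O)}) (c (n + 1)) : ModP O p) ^ p := rfl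
    rw [hcoeffh, ← ha n, ← hb n, ← hacompat n, ← mul_pow, ← hbcompat n]
    congr 1
    rw [hc (n+1), map_mul]

lemma preVal_le_one (hv : v.Integers O) (x : ModP O p) : ModP.preVal K v O p x ≤ 1 := by
  by_cases hx : x = 0
  · rw [hx, ModP.preVal_zero]; exact zero_le_one
  · obtain ⟨r, rfl⟩ := Ideal.Quotient.mk_surjective x
    rw [ModP.preVal_mk hv hx]
    exact hv.map_le_one r

lemma coeff_iter_pthRoot (f : Perfection (ModP O p) p) (k n : ℕ) :
    Perfection.coeff (ModP O p) p n
      ((⇑(Perfection.pthRoot (ModP O p) p))^[k] f) =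
    Perfection.coeff (ModP O p) p (n + k) f := by
  induction k generalizing f with
  | zero => simp
  | succ k ih =>
    rw [Function.iterate_succ_apply, ih, Perfection.coe_pthRoot_eq_symm_frobeniusEquiv, Perfection.coeff_symm_frobeniusEquiv, ← Nat.add_assoc]

lemma dvd_of_iter_pthRoot_dvd (k : ℕ) {f g : Perfection (ModP O p) p}
    (h : (⇑(Perfection.pthRoot (ModP O p) p))^[k] f ∣
      (⇑(Perfection.pthRoot (ModP O p) p))^[k] g) : f ∣ g := by
  induction k generalizing f g with
  | zero => simpa using h
  | succ k ih =>
    rw [Function.iterate_succ_apply, Function.iterate_succ_apply] at h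
    have h2 := ih h
    have h3 := map_dvd (frobenius (Perfection (ModP O p) p) p) h2
    have hF : ∀ x : Perfection (ModP O p) p,
        frobenius (Perfection (ModP O p) p) p (Perfection.pthRoot (ModP O p) p x) = x := by
      intro x
      exact RingHom.congr_fun Perfection.frobenius_pthRoot x
    rwa [hF f, hF g] at h3

lemma dvd_of_val_le (hvp : v (p : K) ≠ 0) {f g : PreTilt O p} (hf0 : f ≠ 0)
    (hle : PreTilt.val K v O hv p g ≤ PreTilt.val K v O hv p f) : f ∣ g := by
  classical
  by_cases hg0 : g = 0
  · simp [hg0]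
  obtain ⟨m2, hm2⟩ : ∃ n, Perfection.coeff (ModP O p) p n g ≠ 0 :=
    not_forall.1 fun h => hg0 (Perfection.ext h)
  obtain ⟨m1, hm1⟩ : ∃ n, Perfection.coeff (ModP O p) p n f ≠ 0 :=
    not_forall.1 fun h => hf0 (Perfection.ext h)
  have hV0 : PreTilt.val K v O hv p f ≠ 0 := fun h => hf0 ((PreTilt.map_eq_zero hv).mp h)
  have hvp_le : v (p : K) ≤ 1 := by
    have := hv.map_le_one (p : O)
    rwa [map_natCast] at this
  have hvp_lt : v (p : K) < 1 := lt_of_le_of_ne hvp_le hvp1.out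
  -- find a level where the coefficient valuation is large
  have hm3 : ∃ n, Perfection.coeff (ModP O p) p n f ≠ 0 ∧
      v (p : K) < ModP.preVal K v O p (Perfection.coeff (ModP O p) p n f) ^ 2 := by
    by_contra hcon
    push_neg at hcon
    have hpos : (0 : ℝ≥0) < PreTilt.val K v O hv p f ^ 2 :=
      pow_pos (lt_of_le_of_ne zero_le (Ne.symm hV0)) 2
    obtain ⟨n, hn⟩ := exists_pow_lt_of_lt_one hpos hvp_lt
    have hfm : Perfection.coeff (ModP O p) p (max n m1) f ≠ 0 :=
      Perfection.coeff_ne_zero_of_le hm1 (le_max_right _ _)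
    have h1 : PreTilt.val K v O hv p f =
        ModP.preVal K v O p (Perfection.coeff (ModP O p) p (max n m1) f) ^
          p ^ (max n m1) := PreTilt.valAux_eq hv hfm
    have h2 := hcon (max n m1) hfm
    have h3 : PreTilt.val K v O hv p f ^ 2 ≤ v (p : K) ^ p ^ (max n m1) := by
      rw [h1, ← pow_mul, mul_comm, pow_mul]
      exact pow_le_pow_left' h2 _
    have h4 : v (p : K) ^ p ^ (max n m1) ≤ v (p : K) ^ n := by
      refine pow_le_pow_of_le_one zero_le hvp_le ?_
      calc n ≤ max n m1 := le_max_left _ _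
        _ ≤ p ^ (max n m1) := (Nat.lt_pow_self hp.out.one_lt).le
    exact absurd (h3.trans h4) (not_le.mpr hn)
  obtain ⟨m3, hm3f, hm3big⟩ := hm3
  set k := max m2 m3 with hk
  apply dvd_of_iter_pthRoot_dvd k
  have hcf : ∀ n, Perfection.coeff (ModP O p) p (n + k) f ≠ 0 := fun n =>
    Perfection.coeff_ne_zero_of_le hm3f (le_trans (le_max_right _ _) (Nat.le_add_left k n))
  have hcg : ∀ n, Perfection.coeff (ModP O p) p (n + k) g ≠ 0 := fun n =>
    Perfection.coeff_ne_zero_of_le hm2 (le_trans (le_max_left _ _) (Nat.le_add_left k n))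
  refine dvd_core hv hvp _ _ (fun n => by erw [coeff_iter_pthRoot]; exact hcf n)
    (fun n => by erw [coeff_iter_pthRoot]; exact hcg n) (fun n => ?_) (fun n => ?_)
  · erw [coeff_iter_pthRoot, coeff_iter_pthRoot]
    have e1 : PreTilt.val K v O hv p g =
        ModP.preVal K v O p (Perfection.coeff (ModP O p) p (n + k) g) ^ p ^ (n + k) :=
      PreTilt.valAux_eq hv (hcg n)
    have e2 : PreTilt.val K v O hv p f =
        ModP.preVal K v O p (Perfection.coeff (ModP O p) p (n + k) f) ^ p ^ (n + k) :=
      PreTilt.valAux_eq hv (hcf n)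
    refine le_of_pow_le_pow_left₀ (n := p ^ (n + k)) (pow_ne_zero _ hp.out.ne_zero)
      zero_le ?_
    rw [← e1, ← e2]
    exact hle
  · erw [coeff_iter_pthRoot]
    have e2 : ModP.preVal K v O p (Perfection.coeff (ModP O p) p m3 f) ^ p ^ m3 =
        ModP.preVal K v O p (Perfection.coeff (ModP O p) p (n + k) f) ^ p ^ (n + k) :=
      (PreTilt.valAux_eq hv hm3f).symm.trans (PreTilt.valAux_eq hv (hcf n))
    have hmle : m3 ≤ n + k := le_trans (le_max_right _ _) (Nat.le_add_left k n)
    have h5 : ModP.preVal K v O p (Perfection.coeff (ModP O p) p m3 f) ≤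
        ModP.preVal K v O p (Perfection.coeff (ModP O p) p (n + k) f) := by
      refine le_of_pow_le_pow_left₀ (pow_ne_zero _ hp.out.ne_zero) zero_le (n := p ^ m3) ?_
      rw [e2]
      exact pow_le_pow_of_le_one zero_le (preVal_le_one hv _)
        (Nat.pow_le_pow_right hp.out.pos hmle)
    calc v (p : K) < ModP.preVal K v O p
          (Perfection.coeff (ModP O p) p m3 f) ^ 2 := hm3big
      _ ≤ ModP.preVal K v O p (Perfection.coeff (ModP O p) p (n + k) f) ^ 2 :=
          pow_le_pow_left' h5 2

end Aux

/-- Let `Ẽ⁺` be the tilt (perfection of `O/p`) of the ring of integers `O` of an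
algebraically closed complete nonarchimedean field `K` (e.g. `ℂ_p`), and let
`ε ∈ Ẽ⁺` be the element determined by a compatible system `(ζ_{p^n})` of
primitive `p^n`-th roots of unity.  Then the valuation of `ε − 1` equals
`p/(p−1)` (multiplicatively, `val(ε−1) = v(p)^{p/(p−1)}`); in particular it is
positive (i.e. `val(ε−1) < 1` and `ε − 1 ≠ 0`), so that
`Ẽ = Ẽ⁺[(ε−1)⁻¹]` is the fraction field of `Ẽ⁺`: every element of the fraction
field becomes integral after multiplying by a power of `ε − 1`. -/
theorem stmt8 (p : ℕ) [Fact p.Prime]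
    (K : Type*) [Field K] (v : Valuation K ℝ≥0)
    (O : Type*) [CommRing O] [Algebra O K] (hv : v.Integers O)
    [Fact (v p ≠ 1)] (hvp : v p ≠ 0)
    (ζ : ℕ → O) (hζ0 : ζ 0 = 1)
    (hζprim : ∀ n : ℕ, IsPrimitiveRoot (ζ n) (p ^ n))
    (hζcompat : ∀ n : ℕ, ζ (n + 1) ^ p = ζ n)
    (ε : PreTilt O p)
    (hε : haveI := stmt8_fact_not_isUnit p K v O hv
      ∀ n : ℕ, Perfection.coeff (ModP O p) p n ε =
      Ideal.Quotient.mk _ (ζ n)) :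
    haveI := stmt8_fact_not_isUnit p K v O hv
    PreTilt.val K v O hv p (ε - 1) = (v p) ^ ((p : ℝ) / ((p : ℝ) - 1)) ∧
    PreTilt.val K v O hv p (ε - 1) < 1 ∧ ε - 1 ≠ 0 ∧
    (∀ x : FractionRing (PreTilt O p), ∃ (a : PreTilt O p) (n : ℕ),
      x * (algebraMap (PreTilt O p) (FractionRing (PreTilt O p))
            (ε - 1)) ^ n =
        algebraMap (PreTilt O p) (FractionRing (PreTilt O p)) a) := by
  haveI := stmt8_fact_not_isUnit p K v O hv
  haveI := PreTilt.isDomain K v O hv p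
  have hp := ‹Fact p.Prime›
  classical
  set T := v (algebraMap O K (ζ 2 - 1)) with hT
  have hTe : T ^ (p * (p - 1)) = v (p : K) := aux_val_prim p v hv (hζprim 2)
  have he2 : 2 ≤ p * (p - 1) := by
    have h2 := hp.out.two_le
    nlinarith [Nat.sub_add_cancel (le_trans one_le_two h2)]
  have hT1 : T ≤ 1 := hv.map_le_one _
  have hT0 : T ≠ 0 := by
    intro h
    rw [h, zero_pow (by omega : p * (p - 1) ≠ 0)] at hTe
    exact hvp hTe.symm
  have hTlt1 : T < 1 := by
    refine lt_of_le_of_ne hT1 fun h => ?_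
    rw [h, one_pow] at hTe
    exact (‹Fact (v (p : K) ≠ 1)›).out hTe.symm
  have hvp_lt_T : v (p : K) < T := by
    rw [← hTe]
    calc T ^ (p * (p - 1)) < T ^ 1 :=
      pow_lt_pow_right_of_lt_one₀ (lt_of_le_of_ne zero_le (Ne.symm hT0)) hTlt1 (by omega)
      _ = T := pow_one T
  -- coefficient of ε - 1
  have hcoeff : ∀ n, Perfection.coeff (ModP O p) p n ((ε - 1 : PreTilt O p)) =
      Ideal.Quotient.mk (Ideal.span {(p : O)}) (ζ n - 1) := by
    intro n
    erw [map_sub, map_one, hε n, map_sub, map_one]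
  have hc2 : Perfection.coeff (ModP O p) p 2 ((ε - 1 : PreTilt O p)) ≠ 0 := by
    rw [hcoeff 2]
    exact (ModP.v_p_lt_val hv).mp hvp_lt_T
  have hval : PreTilt.val K v O hv p (ε - 1) = T ^ (p ^ 2) := by
    have h1 : PreTilt.val K v O hv p (ε - 1) =
        ModP.preVal K v O p
          (Perfection.coeff (ModP O p) p 2 ((ε - 1 : PreTilt O p))) ^ p ^ 2 :=
      PreTilt.valAux_eq hv hc2
    rw [h1, hcoeff 2, ModP.preVal_mk hv (by rw [← hcoeff 2]; exact hc2)]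
  -- the rpow identity
  have hrpow : PreTilt.val K v O hv p (ε - 1) = (v (p : K)) ^ ((p : ℝ) / ((p : ℝ) - 1)) := by
    have hTr : T = (v (p : K)) ^ (((p * (p - 1) : ℕ) : ℝ))⁻¹ := by
      rw [← hTe, ← NNReal.rpow_natCast T (p * (p - 1)), ← NNReal.rpow_mul,
        mul_inv_cancel₀ (by exact_mod_cast (by omega : (p * (p-1) : ℕ) ≠ 0)), NNReal.rpow_one]
    rw [hval, hTr, ← NNReal.rpow_natCast ((v (p : K)) ^ (((p * (p - 1) : ℕ) : ℝ))⁻¹) (p ^ 2),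
      ← NNReal.rpow_mul]
    congr 1
    have hp2 : (2 : ℝ) ≤ (p : ℝ) := by exact_mod_cast hp.out.two_le
    have hps : ((p - 1 : ℕ) : ℝ) = (p : ℝ) - 1 := by
      have := hp.out.one_le
      push_cast [Nat.cast_sub this]
      ring
    push_cast [hps]
    rw [inv_mul_eq_div, div_eq_div_iff (by nlinarith) (by nlinarith)]
    ring
  refine ⟨hrpow, ?_, ?_, ?_⟩
  · rw [hval]
    exact pow_lt_one₀ zero_le hTlt1 (pow_ne_zero 2 hp.out.ne_zero)
  · intro h
    rw [h, map_zero] at hval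
    exact hT0 (pow_eq_zero_iff (pow_ne_zero 2 hp.out.ne_zero)|>.mp hval.symm)
  · intro x
    have hε1 : ε - 1 ≠ 0 := by
      intro h
      rw [h, map_zero] at hval
      exact hT0 (pow_eq_zero_iff (pow_ne_zero 2 hp.out.ne_zero)|>.mp hval.symm)
    obtain ⟨⟨r, s⟩, hx⟩ := IsLocalization.surj (nonZeroDivisors (PreTilt O p)) x
    have hs0 : (s : PreTilt O p) ≠ 0 := nonZeroDivisors.coe_ne_zero s
    have hvals : PreTilt.val K v O hv p s ≠ 0 := fun h => hs0 ((PreTilt.map_eq_zero hv).mp h)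
    have hvalθ : PreTilt.val K v O hv p (ε - 1) < 1 := by
      rw [hval]; exact pow_lt_one₀ zero_le hTlt1 (pow_ne_zero 2 hp.out.ne_zero)
    obtain ⟨n, hn⟩ := exists_pow_lt_of_lt_one
      (lt_of_le_of_ne zero_le (Ne.symm hvals)) hvalθ
    have hdvd : (s : PreTilt O p) ∣ (ε - 1) ^ n :=
      dvd_of_val_le hvp hs0 (by rw [map_pow]; exact hn.le)
    obtain ⟨t, ht⟩ := hdvd
    refine ⟨r * t, n, ?_⟩
    calc x * (algebraMap (PreTilt O p) (FractionRing (PreTilt O p)) (ε - 1)) ^ n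
        = x * algebraMap (PreTilt O p) (FractionRing (PreTilt O p))
            ((ε - 1) ^ n) := by rw [map_pow]
      _ = x * algebraMap (PreTilt O p) (FractionRing (PreTilt O p)) (s * t) := by
          rw [← ht]
      _ = (x * algebraMap (PreTilt O p) (FractionRing (PreTilt O p)) s) *
          algebraMap (PreTilt O p) (FractionRing (PreTilt O p)) t := by
          rw [map_mul, ← mul_assoc]
      _ = algebraMap (PreTilt O p) (FractionRing (PreTilt O p)) (r * t) := by
          rw [hx, ← map_mul]
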